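/- Let ℙ be a shift-invariant probability measure on 𝒜^ℕ satisfying the upper-decoupling inequality ℙ_{n+m}(ab) ≤ C ℙₙ(a) ℙₘ(b). Then for every n, every word a with ℙₙ(a) > 0, and every j ≥ 1: ℙ({x : R̂ₙ(x) = j and x₁ⁿ = a}) ≤ C² ℙₙ(a) ℙ̂ₙ(a), where R̂ₙ(x) = inf{k ≥ 1 : x_{n+k}^{n+k+n−1} = x̂₁ⁿ}. -/

import Mathlib

open MeasureTheory Filter Finset

variable {𝒜 : Type*}

/-- The left shift on one-sided sequences. -/
def shift : (ℕ → 𝒜) → (ℕ → 𝒜) := fun x n => x (n + 1)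

/-- The `n`-prefix of a sequence (0-indexed). -/
def pref (n : ℕ) (x : ℕ → 𝒜) : Fin n → 𝒜 := fun i => x i.val

/-- The cylinder determined by a word. -/
def cyl {n : ℕ} (a : Fin n → 𝒜) : Set (ℕ → 𝒜) := {x | pref n x = a}

/-- The `n`-th marginal of a measure, as a real-valued function on words. -/
noncomputable def marg [MeasurableSpace 𝒜] (P : Measure (ℕ → 𝒜)) (n : ℕ)
    (a : Fin n → 𝒜) : ℝ := (P (cyl a)).toReal

/-- The reversal of a word with respect to an involution `θ`. -/
def wordRev (θ : 𝒜 → 𝒜) {n : ℕ} (a : Fin n → 𝒜) : Fin n → 𝒜 := fun i => θ (a i.rev)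

/-- Shift invariance of a measure. -/
def ShiftInv [MeasurableSpace 𝒜] (P : Measure (ℕ → 𝒜)) : Prop :=
  ∀ s : Set (ℕ → 𝒜), P (shift ⁻¹' s) = P s

/-- The waiting time `Wₙ(x,y)`: first `k ≥ 1` such that `y_k^{k+n−1} = x₁ⁿ`
(0-indexed: `y (k−1+i) = x i` for `i < n`), with value `∞` if no such `k` exists. -/
noncomputable def waitT (n : ℕ) (x y : ℕ → 𝒜) : ℕ∞ :=
  sInf ((fun k : ℕ => (k : ℕ∞)) ''
    {k : ℕ | 1 ≤ k ∧ ∀ i : Fin n, y (k - 1 + i.val) = x i.val})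

/-- The recurrence time `Rₙ(x)`: first `k ≥ 1` such that `x_{n+k}^{n+k+n−1} = x₁ⁿ`. -/
noncomputable def recT (n : ℕ) (x : ℕ → 𝒜) : ℕ∞ :=
  sInf ((fun k : ℕ => (k : ℕ∞)) ''
    {k : ℕ | 1 ≤ k ∧ ∀ i : Fin n, x (n + k - 1 + i.val) = x i.val})

/-- The reversed recurrence time `R̂ₙ(x)`: first `k ≥ 1` such that
`x_{n+k}^{n+k+n−1} = x̂₁ⁿ`, where `x̂₁ⁿ` is the `θ`-reversal of the `n`-prefix. -/
noncomputable def recRevT (θ : 𝒜 → 𝒜) (n : ℕ) (x : ℕ → 𝒜) : ℕ∞ :=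
  sInf ((fun k : ℕ => (k : ℕ∞)) ''
    {k : ℕ | 1 ≤ k ∧ ∀ i : Fin n, x (n + k - 1 + i.val) = wordRev θ (pref n x) i})

/-- Under the upper-decoupling inequality `ℙ_{n+m}(ab) ≤ C ℙₙ(a) ℙₘ(b)`, for every `n`,
every word `a` with `ℙₙ(a) > 0` and every `j ≥ 1`:
`ℙ({x : R̂ₙ(x) = j, x₁ⁿ = a}) ≤ C² ℙₙ(a) ℙ̂ₙ(a)`. -/
lemma sInf_image_coe_mem {K : Set ℕ} {j : ℕ}
    (h : sInf ((fun k : ℕ => (k : ℕ∞)) '' K) = (j : ℕ∞)) : j ∈ K := by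
  have hK : K.Nonempty := by
    by_contra hc
    rw [Set.not_nonempty_iff_eq_empty] at hc
    rw [hc, Set.image_empty, sInf_empty] at h
    exact (ENat.coe_ne_top j) h.symm
  have hm : sInf K ∈ K := Nat.sInf_mem hK
  have h1 : sInf ((fun k : ℕ => (k : ℕ∞)) '' K) = ((sInf K : ℕ) : ℕ∞) := by
    apply le_antisymm
    · exact sInf_le ⟨_, hm, rfl⟩
    · apply le_sInf
      rintro y ⟨k, hk, rfl⟩
      simpa using (Nat.cast_le (α := ℕ∞)).mpr (Nat.sInf_le hk)
  have : (j : ℕ∞) = ((sInf K : ℕ) : ℕ∞) := h ▸ h1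
  rw [Nat.cast_inj.mp this]
  exact hm

lemma cyl_measurable [MeasurableSpace 𝒜] [MeasurableSingletonClass 𝒜]
    {k : ℕ} (b : Fin k → 𝒜) : MeasurableSet (cyl b) := by
  have : cyl b = ⋂ i : Fin k, (fun x : ℕ → 𝒜 => x i.val) ⁻¹' {b i} := by
    ext x
    simp [cyl, pref, funext_iff]
  rw [this]
  exact MeasurableSet.iInter fun i => (measurable_pi_apply _) (measurableSet_singleton _)


theorem recRev_level_estimate [Fintype 𝒜] [MeasurableSpace 𝒜] [MeasurableSingletonClass 𝒜]
    (θ : 𝒜 → 𝒜) (hθ : Function.Involutive θ)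
    (P : Measure (ℕ → 𝒜)) [IsProbabilityMeasure P] (hinv : ShiftInv P)
    (C : ℝ) (hC : 1 ≤ C)
    (hdec : ∀ (n m : ℕ) (a : Fin n → 𝒜) (b : Fin m → 𝒜),
      marg P (n + m) (Fin.append a b) ≤ C * marg P n a * marg P m b) :
    ∀ (n : ℕ) (a : Fin n → 𝒜), 0 < marg P n a → ∀ j : ℕ, 1 ≤ j →
      (P {x | recRevT θ n x = (j : ℕ∞) ∧ pref n x = a}).toReal ≤
        C ^ 2 * marg P n a * marg P n (wordRev θ a) := by
  intro n a _ha j hj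
  set ahat := wordRev θ a with hahat
  set m := j - 1 with hmdef
  set w : (Fin m → 𝒜) → (Fin (n + m + n) → 𝒜) :=
    fun ζ => Fin.append (Fin.append a ζ) ahat with hw
  have hC0 : (0 : ℝ) ≤ C := le_trans zero_le_one hC
  -- inclusion into the union of cylinders
  have hsub : {x | recRevT θ n x = (j : ℕ∞) ∧ pref n x = a} ⊆
      ⋃ ζ : Fin m → 𝒜, cyl (w ζ) := by
    rintro x ⟨hr, hp⟩
    have hjK := sInf_image_coe_mem hr
    obtain ⟨-, hx⟩ := hjK
    refine Set.mem_iUnion.mpr ⟨fun i => x (n + i.val), ?_⟩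
    show pref (n + m + n) x = _
    funext i
    refine Fin.addCases (fun i => ?_) (fun i => ?_) i
    · rw [hw]; simp only [Fin.append_left]
      refine Fin.addCases (fun i => ?_) (fun i => ?_) i
      · rw [Fin.append_left]
        have := congrFun hp i
        simpa [pref] using this
      · rw [Fin.append_right]
        simp [pref]
    · rw [hw]; simp only [Fin.append_right]
      have := hx i
      rw [hp] at this
      have hidx : n + j - 1 + i.val = n + m + i.val := by omega
      rw [hidx] at this
      simpa [pref] using this
  -- each cylinder bound
  have hbound : ∀ ζ : Fin m → 𝒜, marg P (n + m + n) (w ζ)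
      ≤ C ^ 2 * marg P n a * marg P n ahat * marg P m ζ := by
    intro ζ
    have h1 := hdec (n + m) n (Fin.append a ζ) ahat
    have h2 := hdec n m a ζ
    have hb : (0:ℝ) ≤ marg P n ahat := ENNReal.toReal_nonneg
    have hz : (0:ℝ) ≤ marg P m ζ := ENNReal.toReal_nonneg
    have ha' : (0:ℝ) ≤ marg P n a := ENNReal.toReal_nonneg
    calc marg P (n + m + n) (w ζ)
        ≤ C * marg P (n + m) (Fin.append a ζ) * marg P n ahat := h1
      _ ≤ C * (C * marg P n a * marg P m ζ) * marg P n ahat := by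
          exact mul_le_mul_of_nonneg_right (mul_le_mul_of_nonneg_left h2 hC0) hb
      _ = C ^ 2 * marg P n a * marg P n ahat * marg P m ζ := by ring
  -- sum of marginals over middle words is 1
  have hsum1 : ∑ ζ : Fin m → 𝒜, marg P m ζ = 1 := by
    have hdisj : Pairwise (Function.onFun Disjoint (fun ζ : Fin m → 𝒜 => cyl ζ)) := by
      intro ζ ζ' hne
      simp only [Function.onFun, Set.disjoint_left]
      rintro x hx hx'
      exact hne (hx.symm.trans hx')
    have hU := measure_iUnion (μ := P) hdisj (fun ζ : Fin m → 𝒜 => cyl_measurable ζ)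
    have hunion : (⋃ ζ : Fin m → 𝒜, cyl ζ) = Set.univ := by
      ext x
      simp only [Set.mem_iUnion, Set.mem_univ, iff_true]
      exact ⟨pref m x, rfl⟩
    rw [hunion, measure_univ, tsum_fintype] at hU
    have := congrArg ENNReal.toReal hU
    rw [ENNReal.toReal_one,
      ENNReal.toReal_sum (fun ζ _ => measure_ne_top P _)] at this
    exact this.symm
  -- put things together
  have hmeasle : P {x | recRevT θ n x = (j : ℕ∞) ∧ pref n x = a}
      ≤ ∑ ζ : Fin m → 𝒜, P (cyl (w ζ)) :=
    (measure_mono hsub).trans ((measure_iUnion_le _).trans_eq (tsum_fintype _))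
  have hsumfin : (∑ ζ : Fin m → 𝒜, P (cyl (w ζ))) ≠ ⊤ :=
    ENNReal.sum_ne_top.mpr (fun ζ _ => measure_ne_top P _)
  calc (P {x | recRevT θ n x = (j : ℕ∞) ∧ pref n x = a}).toReal
      ≤ (∑ ζ : Fin m → 𝒜, P (cyl (w ζ))).toReal := ENNReal.toReal_mono hsumfin hmeasle
    _ = ∑ ζ : Fin m → 𝒜, marg P (n + m + n) (w ζ) :=
        ENNReal.toReal_sum (fun ζ _ => measure_ne_top P _)
    _ ≤ ∑ ζ : Fin m → 𝒜, C ^ 2 * marg P n a * marg P n ahat * marg P m ζ :=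
        Finset.sum_le_sum (fun ζ _ => hbound ζ)
    _ = C ^ 2 * marg P n a * marg P n ahat * ∑ ζ : Fin m → 𝒜, marg P m ζ := by
        rw [Finset.mul_sum]
    _ = C ^ 2 * marg P n a * marg P n ahat := by rw [hsum1, mul_one]
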